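/- The neighborhood filter with homogeneous spatial kernel is a contrast change: there exists a function g : ℝ → ℝ such that Fu(x) = g(u(x)) for a.e. x ∈ Ω, given by g(t) = (∫_0^{|Ω|} K_h(t − u_*(s)) u_*(s) ds)/(∫_0^{|Ω|} K_h(t − u_*(s)) ds). -/

import Mathlib

open MeasureTheory Set
open scoped ENNReal NNReal

/-- The distribution function `m_u(q) = |{x ∈ Ω : u(x) > q}|`. -/
noncomputable def distFun {d : ℕ} (Ω : Set (Fin d → ℝ)) (u : (Fin d → ℝ) → ℝ) (q : ℝ) : ℝ :=
  (volume {x ∈ Ω | q < u x}).toReal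

/-- The decreasing rearrangement `u_*(s) = inf {q : m_u(q) ≤ s}`. -/
noncomputable def decRear {d : ℕ} (Ω : Set (Fin d → ℝ)) (u : (Fin d → ℝ) → ℝ) (s : ℝ) : ℝ :=
  sInf {q : ℝ | distFun Ω u q ≤ s}

section Aux

variable {d : ℕ} {Ω : Set (Fin d → ℝ)} {u : (Fin d → ℝ) → ℝ} {B : ℝ}

lemma sep_eq_inter (q : ℝ) : {x ∈ Ω | q < u x} = u ⁻¹' (Ioi q) ∩ Ω := by
  ext x; simp [and_comm, mem_preimage]

lemma vfin (hfin : volume Ω ≠ ⊤) (q : ℝ) : volume {x ∈ Ω | q < u x} ≠ ⊤ :=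
  ((measure_mono (sep_subset _ _)).trans_lt hfin.lt_top).ne

lemma distFun_le (hfin : volume Ω ≠ ⊤) (q : ℝ) :
    distFun Ω u q ≤ (volume Ω).toReal :=
  ENNReal.toReal_mono hfin (measure_mono (sep_subset _ _))

lemma distFun_antitone (hfin : volume Ω ≠ ⊤) : Antitone (distFun Ω u) := by
  intro q q' h
  exact ENNReal.toReal_mono (vfin hfin q)
    (measure_mono fun x hx => ⟨hx.1, lt_of_le_of_lt h hx.2⟩)

lemma distFun_restrict (hΩm : MeasurableSet Ω) (q : ℝ) :
    distFun Ω u q = ((volume.restrict Ω) (u ⁻¹' (Ioi q))).toReal := by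
  rw [distFun, Measure.restrict_apply' hΩm, sep_eq_inter]

/-- If `|u| ≤ B` a.e. on `Ω` then `distFun Ω u q = 0` for `q ≥ B`. -/
lemma distFun_eq_zero (hΩm : MeasurableSet Ω)
    (hB : ∀ᵐ x ∂(volume.restrict Ω), |u x| ≤ B) {q : ℝ} (hq : B ≤ q) :
    distFun Ω u q = 0 := by
  rw [distFun_restrict hΩm]
  have : (volume.restrict Ω) (u ⁻¹' (Ioi q)) = 0 := by
    refine measure_mono_null ?_ (mem_ae_iff.mp hB)
    · intro x hx
      simp only [mem_preimage, mem_Ioi] at hx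
      simp only [mem_compl_iff, mem_setOf_eq, not_le]
      exact lt_of_le_of_lt hq (lt_of_lt_of_le hx (le_abs_self _))
  simp [this]

/-- If `|u| ≤ B` a.e. on `Ω` then `distFun Ω u q = |Ω|` for `q < -B`. -/
lemma distFun_eq_full (hΩm : MeasurableSet Ω)
    (hB : ∀ᵐ x ∂(volume.restrict Ω), |u x| ≤ B) {q : ℝ} (hq : q < -B) :
    distFun Ω u q = (volume Ω).toReal := by
  rw [distFun_restrict hΩm]
  have h1 : (volume.restrict Ω) (u ⁻¹' (Ioi q)) = (volume.restrict Ω) univ := by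
    refine measure_congr ?_
    rw [Filter.eventuallyEq_set]
    filter_upwards [hB] with x hx
    simp only [mem_preimage, mem_Ioi, mem_univ, iff_true]
    have := neg_abs_le (u x)
    linarith [abs_le.mp hx |>.1]
  rw [h1, Measure.restrict_apply_univ]

lemma distFun_mem (hΩm : MeasurableSet Ω)
    (hB : ∀ᵐ x ∂(volume.restrict Ω), |u x| ≤ B) {s : ℝ} (hs : 0 ≤ s) :
    B ∈ {q : ℝ | distFun Ω u q ≤ s} := by
  simp [distFun_eq_zero hΩm hB le_rfl, hs]

lemma distFun_bddBelow (hΩm : MeasurableSet Ω) (hfin : volume Ω ≠ ⊤)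
    (hB : ∀ᵐ x ∂(volume.restrict Ω), |u x| ≤ B) {s : ℝ}
    (hs : s < (volume Ω).toReal) :
    BddBelow {q : ℝ | distFun Ω u q ≤ s} := by
  refine ⟨-B, fun q' hq' => ?_⟩
  by_contra hc
  push_neg at hc
  have := distFun_eq_full hΩm hB hc
  simp only [mem_setOf_eq, this] at hq'
  linarith

/-- Key equimeasurability fact: for `s ∈ (0, |Ω|)`,
`q < u_*(s) ↔ s < m_u(q)`. -/
lemma decRear_gt_iff (hΩm : MeasurableSet Ω) (hfin : volume Ω ≠ ⊤)
    (hB : ∀ᵐ x ∂(volume.restrict Ω), |u x| ≤ B) {s : ℝ}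
    (hs : s ∈ Ioo 0 (volume Ω).toReal) (q : ℝ) :
    q < decRear Ω u s ↔ s < distFun Ω u q := by
  constructor
  · intro h
    by_contra hc
    push_neg at hc
    have : decRear Ω u s ≤ q :=
      csInf_le (distFun_bddBelow hΩm hfin hB hs.2) hc
    linarith
  · intro h
    -- right continuity: find n with s < distFun Ω u (q + 1/(n+1))
    have hU : {x | x ∈ Ω ∧ q < u x} =
        ⋃ n : ℕ, {x | x ∈ Ω ∧ q + 1 / (n + 1) < u x} := by
      ext x
      simp only [mem_setOf_eq, mem_iUnion]
      constructor
      · rintro ⟨hx, hq⟩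
        obtain ⟨n, hn⟩ := exists_nat_one_div_lt (sub_pos.2 hq)
        exact ⟨n, hx, by push_cast at hn ⊢; linarith⟩
      · rintro ⟨n, hx, hq⟩
        refine ⟨hx, lt_of_le_of_lt ?_ hq⟩
        have : (0 : ℝ) < 1 / (n + 1) := by positivity
        linarith
    have hmono : Monotone fun n : ℕ => {x | x ∈ Ω ∧ q + 1 / (n + 1) < u x} := by
      intro n m hnm x hx
      refine ⟨hx.1, lt_of_le_of_lt ?_ hx.2⟩
      have h1 : (1 : ℝ) / (m + 1) ≤ 1 / (n + 1) := by
        apply one_div_le_one_div_of_le (by positivity)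
        push_cast; linarith [(Nat.cast_le (α := ℝ)).2 hnm]
      linarith
    have hsup : volume {x | x ∈ Ω ∧ q < u x} =
        ⨆ n : ℕ, volume {x | x ∈ Ω ∧ q + 1 / (n + 1) < u x} := by
      rw [hU]
      exact hmono.directed_le.measure_iUnion
    have hlt : ENNReal.ofReal s < volume {x | x ∈ Ω ∧ q < u x} := by
      rw [ENNReal.ofReal_lt_iff_lt_toReal hs.1.le (vfin hfin q)]
      exact h
    rw [hsup, lt_iSup_iff] at hlt
    obtain ⟨n, hn⟩ := hlt
    have hn' : s < distFun Ω u (q + 1 / (n + 1)) :=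
      (ENNReal.ofReal_lt_iff_lt_toReal hs.1.le (vfin hfin _)).mp hn
    have hlow : q + 1 / (n + 1) ≤ decRear Ω u s := by
      refine le_csInf ⟨B, distFun_mem hΩm hB hs.1.le⟩ fun q' hq' => ?_
      by_contra hc
      push_neg at hc
      have := distFun_antitone (u := u) hfin hc.le
      simp only [mem_setOf_eq] at hq'
      linarith
    have : (0 : ℝ) < 1 / (n + 1) := by positivity
    linarith

lemma decRear_antitoneOn (hΩm : MeasurableSet Ω) (hfin : volume Ω ≠ ⊤)
    (hB : ∀ᵐ x ∂(volume.restrict Ω), |u x| ≤ B) :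
    AntitoneOn (decRear Ω u) (Ioo 0 (volume Ω).toReal) := by
  intro s hs s' hs' hss
  exact csInf_le_csInf (distFun_bddBelow hΩm hfin hB hs'.2)
    ⟨B, distFun_mem hΩm hB hs.1.le⟩
    (fun q hq => le_trans hq hss)

end Aux

/-- The neighborhood filter with homogeneous spatial kernel is a contrast
change: `Fu(x) = g(u(x))` for a.e. `x ∈ Ω`, where
`g(t) = (∫_0^{|Ω|} K_h(t − u_*(s)) u_*(s) ds)/(∫_0^{|Ω|} K_h(t − u_*(s)) ds)`. -/
theorem neighborhood_filter_contrast_change {d : ℕ} (Ω : Set (Fin d → ℝ))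
    (hΩo : IsOpen Ω) (hΩb : Bornology.IsBounded Ω)
    (Kh : ℝ → ℝ) (hKm : Measurable Kh) (hKpos : ∀ ξ, 0 ≤ Kh ξ)
    (hKb : ∃ C, ∀ ξ, Kh ξ ≤ C)
    (u : (Fin d → ℝ) → ℝ) (hum : Measurable u)
    (hu : MemLp u ⊤ (volume.restrict Ω))
    (hden : ∀ x ∈ Ω, 0 < ∫ y in Ω, Kh (u x - u y)) :
    ∃ g : ℝ → ℝ,
      (g = fun t =>
        (∫ s in Ioo 0 (volume Ω).toReal, Kh (t - decRear Ω u s) * decRear Ω u s) /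
          (∫ s in Ioo 0 (volume Ω).toReal, Kh (t - decRear Ω u s))) ∧
      ∀ᵐ x ∂(volume.restrict Ω),
        (∫ y in Ω, Kh (u x - u y) * u y) / (∫ y in Ω, Kh (u x - u y)) = g (u x) := by
  have hΩm : MeasurableSet Ω := hΩo.measurableSet
  have hfin : volume Ω ≠ ⊤ := hΩb.measure_lt_top.ne
  set M : ℝ := (volume Ω).toReal with hM
  -- essential bound
  set B : ℝ := (eLpNormEssSup u (volume.restrict Ω)).toReal with hBdef
  have hBfin : eLpNormEssSup u (volume.restrict Ω) ≠ ⊤ := by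
    have := hu.2
    rwa [eLpNorm_exponent_top, lt_top_iff_ne_top] at this
  have hB : ∀ᵐ x ∂(volume.restrict Ω), |u x| ≤ B := by
    filter_upwards [enorm_ae_le_eLpNormEssSup u (volume.restrict Ω)] with x hx
    have : (‖u x‖₊ : ℝ≥0∞).toReal ≤ B :=
      ENNReal.toReal_mono hBfin hx
    simpa [Real.norm_eq_abs] using this
  -- a.e.-measurability of the rearrangement
  have ham : AEMeasurable (decRear Ω u) (volume.restrict (Ioo 0 M)) :=
    aemeasurable_restrict_of_antitoneOn measurableSet_Ioo
      (decRear_antitoneOn hΩm hfin hB)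
  -- equality of pushforward measures
  have hmap : Measure.map u (volume.restrict Ω)
      = Measure.map (decRear Ω u) (volume.restrict (Ioo 0 M)) := by
    have h1 : ∀ q, Measure.map u (volume.restrict Ω) (Ioi q)
        = ENNReal.ofReal (distFun Ω u q) := by
      intro q
      rw [Measure.map_apply hum measurableSet_Ioi, Measure.restrict_apply' hΩm,
        ← sep_eq_inter, ← ENNReal.ofReal_toReal (vfin hfin q)]
      rfl
    have h2 : ∀ q, Measure.map (decRear Ω u) (volume.restrict (Ioo 0 M)) (Ioi q)
        = ENNReal.ofReal (distFun Ω u q) := by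
      intro q
      rw [Measure.map_apply_of_aemeasurable ham measurableSet_Ioi,
        Measure.restrict_apply' measurableSet_Ioo]
      have hset : decRear Ω u ⁻¹' (Ioi q) ∩ Ioo 0 M = Ioo 0 (distFun Ω u q) := by
        ext s
        simp only [mem_inter_iff, mem_preimage, mem_Ioi, mem_Ioo]
        constructor
        · rintro ⟨hq, hs0, hsM⟩
          exact ⟨hs0, (decRear_gt_iff hΩm hfin hB ⟨hs0, hsM⟩ q).1 hq⟩
        · rintro ⟨hs0, hsd⟩
          have hsM : s < M := lt_of_lt_of_le hsd (distFun_le hfin q)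
          exact ⟨(decRear_gt_iff hΩm hfin hB ⟨hs0, hsM⟩ q).2 hsd, hs0, hsM⟩
      rw [hset, Real.volume_Ioo, sub_zero]
    have hu1 : Measure.map u (volume.restrict Ω) univ = volume Ω := by
      rw [Measure.map_apply hum MeasurableSet.univ, preimage_univ,
        Measure.restrict_apply_univ]
    have hu2 : Measure.map (decRear Ω u) (volume.restrict (Ioo 0 M)) univ
        = volume Ω := by
      rw [Measure.map_apply_of_aemeasurable ham MeasurableSet.univ, preimage_univ,
        Measure.restrict_apply_univ, Real.volume_Ioo, sub_zero, hM,
        ENNReal.ofReal_toReal hfin]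
    haveI : IsFiniteMeasure (Measure.map u (volume.restrict Ω)) :=
      ⟨by rw [hu1]; exact hfin.lt_top⟩
    refine Measure.ext_of_Iic _ _ fun a => ?_
    have hc1 : Measure.map u (volume.restrict Ω) (Iic a)
        = Measure.map u (volume.restrict Ω) univ
          - Measure.map u (volume.restrict Ω) (Ioi a) := by
      rw [← Set.compl_Ioi, measure_compl measurableSet_Ioi (by rw [h1]; exact ENNReal.ofReal_ne_top)]
    have hc2 : Measure.map (decRear Ω u) (volume.restrict (Ioo 0 M)) (Iic a)
        = Measure.map (decRear Ω u) (volume.restrict (Ioo 0 M)) univ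
          - Measure.map (decRear Ω u) (volume.restrict (Ioo 0 M)) (Ioi a) := by
      rw [← Set.compl_Ioi, measure_compl measurableSet_Ioi (by rw [h2]; exact ENNReal.ofReal_ne_top)]
    rw [hc1, hc2, hu1, hu2, h1, h2]
  -- transfer of integrals
  have key : ∀ φ : ℝ → ℝ, Measurable φ →
      ∫ y in Ω, φ (u y) = ∫ s in Ioo 0 M, φ (decRear Ω u s) := by
    intro φ hφ
    rw [← integral_map hum.aemeasurable hφ.aestronglyMeasurable, hmap,
      integral_map ham hφ.aestronglyMeasurable]
  refine ⟨_, rfl, ?_⟩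
  refine Filter.Eventually.of_forall fun x => ?_
  have hnum := key (fun w => Kh (u x - w) * w)
    ((hKm.comp (measurable_const.sub measurable_id)).mul measurable_id)
  have hden' := key (fun w => Kh (u x - w))
    (hKm.comp (measurable_const.sub measurable_id))
  rw [hnum, hden']
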